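/- Let f be a non-zero function on a signed graph Γ = (G,σ). Then for any three pairwise distinct weak nodal domains D_1, D_2, D_3 of f, the intersection of their vertex sets is empty: D_1 ∩ D_2 ∩ D_3 = ∅. -/

import Mathlib

open Matrix Polynomial

section NodalDefs

variable {V : Type*}

/-- The product of the signature over consecutive pairs of a list of vertices. -/
noncomputable def chainSign (σ : V → V → ℝ) (l : List V) : ℝ :=
  ((l.zip l.tail).map fun p => σ p.1 p.2).prod

/-- One step of a strong nodal domain walk. -/
def SWalkStep (G : SimpleGraph V) (σ : V → V → ℝ) (f : V → ℝ) (u v : V) : Prop :=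
  G.Adj u v ∧ 0 < f u * σ u v * f v

/-- `x` and `y` are connected by a strong nodal domain walk (S-walk). -/
def SConn (G : SimpleGraph V) (σ : V → V → ℝ) (f : V → ℝ) (x y : V) : Prop :=
  ∃ l : List V, 2 ≤ l.length ∧ l.Chain' (SWalkStep G σ f) ∧
    l.head? = some x ∧ l.getLast? = some y

/-- The strong nodal domain (as a vertex set) containing the non-zero `w`. -/
def strongClass (G : SimpleGraph V) (σ : V → V → ℝ) (f : V → ℝ) (w : V) : Set V :=
  {x | f x ≠ 0 ∧ (x = w ∨ SConn G σ f x w)}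

/-- The set of strong nodal domains (as vertex sets) of `f`. -/
def strongDomains (G : SimpleGraph V) (σ : V → V → ℝ) (f : V → ℝ) : Set (Set V) :=
  {D | ∃ w, f w ≠ 0 ∧ D = strongClass G σ f w}

/-- 𝔖(f): the number of strong nodal domains of `f`. -/
noncomputable def numStrong (G : SimpleGraph V) (σ : V → V → ℝ) (f : V → ℝ) : ℕ :=
  Nat.card (strongDomains G σ f)

/-- A list of vertices is a weak nodal domain walk (W-walk). -/
def IsWWalk (G : SimpleGraph V) (σ : V → V → ℝ) (f : V → ℝ) (l : List V) : Prop :=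
  2 ≤ l.length ∧ l.Chain' G.Adj ∧
    ∀ i j : Fin l.length, i < j → f (l.get i) ≠ 0 → f (l.get j) ≠ 0 →
      (∀ k : Fin l.length, i < k → k < j → f (l.get k) = 0) →
      0 < f (l.get i) * chainSign σ ((l.drop i.val).take (j.val - i.val + 1)) * f (l.get j)

/-- `x` and `y` are connected by a weak nodal domain walk (W-walk). -/
def WConn (G : SimpleGraph V) (σ : V → V → ℝ) (f : V → ℝ) (x y : V) : Prop :=
  ∃ l : List V, IsWWalk G σ f l ∧ l.head? = some x ∧ l.getLast? = some y

/-- The weak nodal domain (as a vertex set) associated with the class of the non-zero `w`: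
the class `W` of `w` together with all vertices having a W-walk to some vertex of `W`. -/
def weakClass (G : SimpleGraph V) (σ : V → V → ℝ) (f : V → ℝ) (w : V) : Set V :=
  {x | (f x ≠ 0 ∧ (x = w ∨ WConn G σ f x w)) ∨
       ∃ u, f u ≠ 0 ∧ (u = w ∨ WConn G σ f u w) ∧ WConn G σ f x u}

/-- The set of weak nodal domains (as vertex sets) of `f`. -/
def weakDomains (G : SimpleGraph V) (σ : V → V → ℝ) (f : V → ℝ) : Set (Set V) :=
  {D | ∃ w, f w ≠ 0 ∧ D = weakClass G σ f w}

/-- 𝔚(f): the number of weak nodal domains of `f`. -/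
noncomputable def numWeak (G : SimpleGraph V) (σ : V → V → ℝ) (f : V → ℝ) : ℕ :=
  Nat.card (weakDomains G σ f)

/-- `σ` is a valid signature on `G`: symmetric and ±1-valued on edges. -/
def IsSignature (G : SimpleGraph V) (σ : V → V → ℝ) : Prop :=
  (∀ x y, σ x y = σ y x) ∧ ∀ x y, G.Adj x y → σ x y = 1 ∨ σ x y = -1

/-- `M` is compatible with the signed graph `(G, σ)`: `(G, σ)` is the induced
signed graph of `M`. -/
def Compatible (M : Matrix V V ℝ) (G : SimpleGraph V) (σ : V → V → ℝ) : Prop :=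
  (∀ x y, G.Adj x y ↔ x ≠ y ∧ M x y ≠ 0) ∧
  (∀ x y, G.Adj x y → σ x y = -(M x y / |M x y|))

/-- A signed graph is balanced if every cycle has positive sign. -/
def IsBalanced (G : SimpleGraph V) (σ : V → V → ℝ) : Prop :=
  ∀ (x : V) (p : G.Walk x x), p.IsCycle → chainSign σ p.support = 1

/-- A signed graph is antibalanced if its negation is balanced. -/
def IsAntibalanced (G : SimpleGraph V) (σ : V → V → ℝ) : Prop :=
  IsBalanced G (fun x y => -(σ x y))

/-- ℓ(G) = |E| - |V| + c(G), the cyclomatic number of `G`. -/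
noncomputable def cyclomatic (G : SimpleGraph V) : ℕ :=
  Nat.card G.edgeSet + Nat.card G.ConnectedComponent - Nat.card V

/-- The subgraph of `G` on the edges `{x,y}` with `f x * σ x y * f y > 0`. -/
def posSubgraph (G : SimpleGraph V) (σ : V → V → ℝ) (f : V → ℝ) : SimpleGraph V where
  Adj x y := G.Adj x y ∧ 0 < f x * σ x y * f y ∧ 0 < f y * σ y x * f x
  symm := ⟨fun _ _ h => ⟨h.1.symm, h.2.2, h.2.1⟩⟩
  loopless := ⟨fun x h => G.loopless.irrefl x h.1⟩

/-- `x` is tree-like: removing `x` and its incident edges increases the number of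
connected components by `d_x - 1`. -/
def IsTreeLike (G : SimpleGraph V) (x : V) : Prop :=
  Nat.card (SimpleGraph.induce {y | y ≠ x} G).ConnectedComponent + 1
    = Nat.card G.ConnectedComponent + Nat.card (G.neighborSet x)

/-- The Fiedler zero set of `f` on `G`. -/
def fiedlerZeroSet (G : SimpleGraph V) (f : V → ℝ) : Set V :=
  {x | f x = 0 ∧ ((∀ y, G.Adj x y → f y = 0) ∨ ¬ IsTreeLike G x)}

end NodalDefs

section MyAux

variable {V : Type*}

lemma chainSign_nil (σ : V → V → ℝ) : chainSign σ ([] : List V) = 1 := rfl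

lemma chainSign_singleton (σ : V → V → ℝ) (a : V) : chainSign σ [a] = 1 := rfl

lemma chainSign_cons_cons (σ : V → V → ℝ) (a b : V) (l : List V) :
    chainSign σ (a :: b :: l) = σ a b * chainSign σ (b :: l) := by
  simp [chainSign]

lemma chainSign_cons (σ : V → V → ℝ) (a : V) (l : List V) :
    chainSign σ (a :: l) = (l.head?.elim 1 (σ a)) * chainSign σ l := by
  cases l with
  | nil => simp [chainSign_nil, chainSign_singleton]
  | cons b l => simp [chainSign_cons_cons]

lemma chainSign_append (σ : V → V → ℝ) (l₁ : List V) (x : V) (l₂ : List V) :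
    chainSign σ (l₁ ++ x :: l₂) = chainSign σ (l₁ ++ [x]) * chainSign σ (x :: l₂) := by
  induction l₁ with
  | nil => simp [chainSign_singleton]
  | cons a l₁ ih =>
    rw [List.cons_append, List.cons_append, chainSign_cons, chainSign_cons σ a (l₁ ++ [x]), ih]
    have : (l₁ ++ x :: l₂).head? = (l₁ ++ [x]).head? := by cases l₁ <;> simp
    rw [this]; ring

lemma chainSign_reverse (σ : V → V → ℝ) (hs : ∀ x y, σ x y = σ y x) (l : List V) :
    chainSign σ l.reverse = chainSign σ l := by
  induction l with
  | nil => rfl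
  | cons a l ih =>
    cases l with
    | nil => rfl
    | cons b l' =>
      have h1 : (a :: b :: l').reverse = l'.reverse ++ b :: [a] := by simp
      rw [h1, chainSign_append, chainSign_cons_cons]
      have h2 : l'.reverse ++ [b] = (b :: l').reverse := by simp
      rw [h2, ih, chainSign_cons_cons, chainSign_singleton, hs a b]
      ring

lemma chainSign_ne_zero {G : SimpleGraph V} {σ : V → V → ℝ}
    (hσ : ∀ x y, G.Adj x y → σ x y = 1 ∨ σ x y = -1) {l : List V}
    (hl : l.Chain' G.Adj) : chainSign σ l ≠ 0 := by
  induction l with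
  | nil => simp [chainSign_nil]
  | cons a l ih =>
    cases l with
    | nil => simp [chainSign_singleton]
    | cons b l' =>
      rw [chainSign_cons_cons]
      change List.IsChain _ _ at hl
      rw [List.isChain_cons_cons] at hl
      have h1 : σ a b ≠ 0 := by rcases hσ a b hl.1 with h | h <;> rw [h] <;> norm_num
      exact mul_ne_zero h1 (ih hl.2)

end MyAux
section MyAux2

variable {V : Type*} {G : SimpleGraph V} {σ : V → V → ℝ} {f : V → ℝ}

/-- Decomposition form of the W-walk condition. -/
def WW (G : SimpleGraph V) (σ : V → V → ℝ) (f : V → ℝ) (l : List V) : Prop :=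
  l.Chain' G.Adj ∧ ∀ p (a : V) m (b : V) s, l = p ++ a :: (m ++ b :: s) →
    f a ≠ 0 → f b ≠ 0 → (∀ c ∈ m, f c = 0) →
    0 < f a * chainSign σ (a :: (m ++ [b])) * f b

lemma seg_take {l p m s : List V} {a b : V} (hl : l = p ++ a :: (m ++ b :: s)) :
    (l.drop p.length).take (m.length + 2) = a :: (m ++ [b]) := by
  subst hl
  rw [List.drop_left]
  show (a :: (m ++ b :: s)).take (m.length + 1 + 1) = _
  rw [List.take_succ_cons]
  congr 1
  rw [show m.length + 1 = m.length + 1 from rfl, List.take_append]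
  simp

lemma getElem_mid {p m s2 : List V} {a : V} {k : ℕ} (h1 : p.length < k)
    (h2 : k < p.length + 1 + m.length) (hk : k < (p ++ a :: (m ++ s2)).length) :
    (p ++ a :: (m ++ s2))[k] = m[k - p.length - 1]'(by omega) := by
  rw [List.getElem_append_right (by omega : p.length ≤ k), List.getElem_cons]
  rw [dif_neg (by omega)]
  exact List.getElem_append_left (by omega)

lemma isWWalk_iff {l : List V} :
    IsWWalk G σ f l ↔ 2 ≤ l.length ∧ WW G σ f l := by
  constructor
  · rintro ⟨hlen, hch, hcond⟩
    refine ⟨hlen, hch, ?_⟩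
    rintro p a m b s hl ha hb hm
    have hlength : l.length = p.length + (m.length + (s.length + 2)) := by
      subst hl; simp; ring
    have hi : p.length < l.length := by omega
    have hj : p.length + m.length + 1 < l.length := by omega
    have hga : l.get ⟨p.length, hi⟩ = a := by
      subst hl
      simp [List.getElem_append_right (le_refl p.length)]
    have hgb : l.get ⟨p.length + m.length + 1, hj⟩ = b := by
      subst hl
      show (p ++ a :: (m ++ b :: s))[p.length + m.length + 1]'hj = b
      rw [List.getElem_append_right (by omega : p.length ≤ p.length + m.length + 1)]
      simp only [show p.length + m.length + 1 - p.length = m.length + 1 by omega]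
      rw [List.getElem_cons_succ]
      rw [List.getElem_append_right (le_refl m.length)]
      simp
    have key := hcond ⟨p.length, hi⟩ ⟨p.length + m.length + 1, hj⟩
      (Fin.mk_lt_mk.mpr (by omega)) (by rw [hga]; exact ha) (by rw [hgb]; exact hb) ?_
    · rw [hga, hgb] at key
      have hseg : ((l.drop p.length).take (p.length + m.length + 1 - p.length + 1))
          = a :: (m ++ [b]) := by
        rw [show p.length + m.length + 1 - p.length + 1 = m.length + 2 by omega]
        exact seg_take hl
      rw [hseg] at key
      exact key
    · rintro ⟨k, hk⟩ h1 h2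
      simp only [Fin.mk_lt_mk] at h1 h2
      have hgk : l.get ⟨k, hk⟩ = m[k - p.length - 1]'(by omega) := by
        subst hl
        rw [List.get_eq_getElem]
        exact getElem_mid h1 (by omega) hk
      rw [hgk]
      exact hm _ (List.getElem_mem _)
  · rintro ⟨hlen, hch, hcond⟩
    refine ⟨hlen, hch, ?_⟩
    rintro ⟨i, hi⟩ ⟨j, hj⟩ hij ha hb hzero
    simp only [Fin.mk_lt_mk] at hij
    simp only [List.get_eq_getElem] at *
    set p := l.take i with hp
    set m := (l.drop (i+1)).take (j - i - 1) with hmdef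
    set s := l.drop (j+1) with hs
    have hplen : p.length = i := by simp [hp]; omega
    have hmlen : m.length = j - i - 1 := by simp [hmdef]; omega
    have hldecomp : l = p ++ l[i] :: (m ++ l[j] :: s) := by
      conv_lhs => rw [← List.take_append_drop i l]
      congr 1
      rw [List.drop_eq_getElem_cons hi]
      congr 1
      conv_lhs => rw [← List.take_append_drop (j - i - 1) (l.drop (i+1))]
      rw [List.drop_drop]
      congr 1
      rw [show i + 1 + (j - i - 1) = j by omega, List.drop_eq_getElem_cons hj]
    have hmzero : ∀ c ∈ m, f c = 0 := by
      intro c hc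
      obtain ⟨t, ht, rfl⟩ := List.mem_iff_getElem.mp hc
      have ht' : t < j - i - 1 := by rw [hmlen] at ht; omega
      have heq : m[t]'ht = l[i + 1 + t]'(by omega) := by
        simp only [hmdef, List.getElem_take, List.getElem_drop]
      have h0 : f (l[i + 1 + t]'(by omega)) = 0 :=
        hzero ⟨i + 1 + t, by omega⟩ (Fin.mk_lt_mk.mpr (by omega))
          (Fin.mk_lt_mk.mpr (by omega))
      exact (congrArg f heq).trans h0
    have key := hcond p l[i] m l[j] s hldecomp ha hb hmzero
    have hseg : (l.drop i).take (j - i + 1) = l[i] :: (m ++ [l[j]]) := by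
      have := seg_take hldecomp
      rw [hplen, hmlen, show j - i - 1 + 2 = j - i + 1 by omega] at this
      exact this
    rw [hseg]
    exact key

end MyAux2
section MyAux3

variable {V : Type*} {G : SimpleGraph V} {σ : V → V → ℝ} {f : V → ℝ}

lemma eq_dropLast_concat {α : Type*} {l : List α} {a : α} (h : l.getLast? = some a) :
    l = l.dropLast ++ [a] := by
  have hne : l ≠ [] := by rintro rfl; simp at h
  have h2 := List.dropLast_append_getLast hne
  rw [List.getLast?_eq_getLast hne] at h
  simp only [Option.some_inj] at h
  rw [h] at h2
  exact h2.symm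

lemma WW.infix {l l' : List V} (h : WW G σ f l) (hinf : l' <:+: l) : WW G σ f l' := by
  obtain ⟨t₁, t₂, hl⟩ := hinf
  refine ⟨h.1.infix ⟨t₁, t₂, hl⟩, ?_⟩
  rintro p a m b s rfl ha hb hm
  exact h.2 (t₁ ++ p) a m b (s ++ t₂) (by rw [← hl]; simp) ha hb hm

lemma flip_adj (G : SimpleGraph V) : flip G.Adj = G.Adj := by
  ext x y; exact G.adj_comm y x

lemma WW.rev (hs : ∀ x y, σ x y = σ y x) {l : List V} (h : WW G σ f l) :
    WW G σ f l.reverse := by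
  refine ⟨by change List.IsChain _ _; rw [List.isChain_reverse]; change List.IsChain (flip G.Adj) _; rw [flip_adj]; exact h.1, ?_⟩
  rintro p a m b s hdec ha hb hm
  have hl : l = s.reverse ++ b :: (m.reverse ++ a :: p.reverse) := by
    rw [← List.reverse_reverse l, hdec]; simp
  have key := h.2 s.reverse b m.reverse a p.reverse hl hb ha
    (fun c hc => hm c (List.mem_reverse.mp hc))
  have hcs : chainSign σ (a :: (m ++ [b])) = chainSign σ (b :: (m.reverse ++ [a])) := by
    rw [← chainSign_reverse σ hs (a :: (m ++ [b]))]
    congr 1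
    simp
  rw [hcs]
  linarith [key]

lemma WW.append_nonzero {q l₂ : List V} {u : V} (h1 : WW G σ f (q ++ [u]))
    (h2 : WW G σ f l₂) (hu : f u ≠ 0) (hhead : l₂.head? = some u) :
    WW G σ f (q ++ l₂) := by
  obtain ⟨t₂, rfl⟩ : ∃ t, l₂ = u :: t := ⟨l₂.tail, List.eq_cons_of_mem_head? hhead⟩
  constructor
  · change List.IsChain _ _
    rw [List.isChain_append]
    refine ⟨(List.isChain_append.mp h1.1).1, h2.1, ?_⟩
    intro c hc y hy
    simp only [List.head?_cons, Option.mem_def, Option.some_inj] at hy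
    subst hy
    exact (List.isChain_append.mp h1.1).2.2 c hc u (by simp)
  · rintro p a m b s hdec ha hb hm
    have hlen : (q ++ u :: t₂).length = p.length + (m.length + (s.length + 2)) := by
      rw [hdec]; simp; ring
    by_cases hcase1 : p.length + m.length + 1 ≤ q.length
    · -- segment inside q ++ [u]
      have hpre1 : (p ++ a :: (m ++ [b])) <+: (q ++ u :: t₂) :=
        ⟨s, by rw [hdec]; simp⟩
      have hpre2 : (q ++ [u]) <+: (q ++ u :: t₂) := ⟨t₂, by simp⟩
      obtain ⟨s', hs'⟩ := List.prefix_of_prefix_length_le hpre1 hpre2 (by simp; omega)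
      exact h1.2 p a m b s' (by rw [← hs']; simp) ha hb hm
    · by_cases hcase2 : q.length ≤ p.length
      · -- segment inside l₂
        have hsuf1 : (a :: (m ++ b :: s)) <:+ (q ++ u :: t₂) := ⟨p, hdec.symm⟩
        have hsuf2 : (u :: t₂) <:+ (q ++ u :: t₂) := ⟨q, rfl⟩
        have hlen2 : (a :: (m ++ b :: s)).length ≤ (u :: t₂).length := by
          simp at hlen ⊢
          omega
        obtain ⟨p', hp'⟩ := List.suffix_of_suffix_length_le hsuf1 hsuf2 hlen2
        exact h2.2 p' a m b s hp'.symm ha hb hm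
      · -- contradiction: u sits strictly inside m
        exfalso
        push_neg at hcase1 hcase2
        have hqlt : q.length < (q ++ u :: t₂).length := by simp
        have h1' : (q ++ u :: t₂)[q.length]'hqlt = u := by
          rw [List.getElem_append_right (le_refl q.length)]
          simp
        have h2' : (q ++ u :: t₂)[q.length]'hqlt
            = m[q.length - p.length - 1]'(by omega) := by
          have he := List.getElem_of_eq hdec hqlt
          rw [he]
          exact getElem_mid hcase2 (by omega) (by rw [← hdec]; exact hqlt)
        apply hu
        rw [← h1', h2']
        exact hm _ (List.getElem_mem _)

end MyAux3
section MyAux4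

variable {V : Type*} {G : SimpleGraph V} {σ : V → V → ℝ} {f : V → ℝ}

lemma wconn_iff {x y : V} : WConn G σ f x y ↔
    ∃ l : List V, (2 ≤ l.length ∧ WW G σ f l) ∧ l.head? = some x ∧ l.getLast? = some y := by
  unfold WConn
  simp only [isWWalk_iff]

lemma wconn_symm (hs : ∀ x y, σ x y = σ y x) {x y : V} (h : WConn G σ f x y) :
    WConn G σ f y x := by
  rw [wconn_iff] at h ⊢
  obtain ⟨l, ⟨hlen, hww⟩, hh, hg⟩ := h
  exact ⟨l.reverse, ⟨by simpa using hlen, hww.rev hs⟩,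
    by rw [List.head?_reverse]; exact hg, by rw [List.getLast?_reverse]; exact hh⟩

lemma wconn_trans {x u y : V} (hu : f u ≠ 0)
    (h1 : WConn G σ f x u) (h2 : WConn G σ f u y) : WConn G σ f x y := by
  rw [wconn_iff] at h1 h2 ⊢
  obtain ⟨l₁, ⟨hlen₁, hww₁⟩, hh₁, hg₁⟩ := h1
  obtain ⟨l₂, ⟨hlen₂, hww₂⟩, hh₂, hg₂⟩ := h2
  have hl₁ : l₁ = l₁.dropLast ++ [u] := eq_dropLast_concat hg₁
  have hql : l₁.dropLast.length = l₁.length - 1 := List.length_dropLast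
  have hqne : l₁.dropLast ≠ [] := by
    rw [← List.length_pos_iff, hql]; omega
  refine ⟨l₁.dropLast ++ l₂, ⟨?_, ?_⟩, ?_, ?_⟩
  · simp; omega
  · exact WW.append_nonzero (hl₁ ▸ hww₁) hww₂ hu hh₂
  · rw [List.head?_append_of_ne_nil _ hqne]
    rw [hl₁, List.head?_append_of_ne_nil _ hqne] at hh₁
    exact hh₁
  · rw [List.getLast?_append_of_ne_nil]
    · exact hg₂
    · rintro rfl; simp at hh₂
  
lemma rel_symm (hs : ∀ x y, σ x y = σ y x) {x y : V}
    (h : x = y ∨ WConn G σ f x y) : y = x ∨ WConn G σ f y x := by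
  rcases h with rfl | h
  · exact Or.inl rfl
  · exact Or.inr (wconn_symm hs h)

lemma rel_trans {x v y : V} (hv : f v ≠ 0)
    (h1 : x = v ∨ WConn G σ f x v) (h2 : v = y ∨ WConn G σ f v y) :
    x = y ∨ WConn G σ f x y := by
  rcases h1 with rfl | h1
  · exact h2
  · rcases h2 with rfl | h2
    · exact Or.inr h1
    · exact Or.inr (wconn_trans hv h1 h2)

lemma weakClass_eq (hs : ∀ x y, σ x y = σ y x) {w w' : V}
    (hw : f w ≠ 0) (hw' : f w' ≠ 0) (hrel : w = w' ∨ WConn G σ f w w') :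
    weakClass G σ f w = weakClass G σ f w' := by
  have hstep : ∀ v, (v = w ∨ WConn G σ f v w) → (v = w' ∨ WConn G σ f v w') :=
    fun v h => rel_trans hw h hrel
  have hstep' : ∀ v, (v = w' ∨ WConn G σ f v w') → (v = w ∨ WConn G σ f v w) :=
    fun v h => rel_trans hw' h (rel_symm hs hrel)
  ext x
  simp only [weakClass, Set.mem_setOf_eq]
  constructor
  · rintro (⟨hx, h⟩ | ⟨u, hu, h, hxu⟩)
    · exact Or.inl ⟨hx, hstep x h⟩
    · exact Or.inr ⟨u, hu, hstep u h, hxu⟩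
  · rintro (⟨hx, h⟩ | ⟨u, hu, h, hxu⟩)
    · exact Or.inl ⟨hx, hstep' x h⟩
    · exact Or.inr ⟨u, hu, hstep' u h, hxu⟩

lemma exists_first_nonzero :
    ∀ l : List V, (∃ u ∈ l, f u ≠ 0) →
      ∃ z a r, l = z ++ a :: r ∧ (∀ c ∈ z, f c = 0) ∧ f a ≠ 0 := by
  intro l
  induction l with
  | nil => rintro ⟨u, hu, -⟩; simp at hu
  | cons v l ih =>
    rintro ⟨u, hu, hfu⟩
    by_cases hv : f v = 0
    · have hul : u ∈ l := by
        rcases List.mem_cons.mp hu with rfl | h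
        · exact absurd hv hfu
        · exact h
      obtain ⟨z, a, r, hl, hz, ha⟩ := ih ⟨u, hul, hfu⟩
      exact ⟨v :: z, a, r, by rw [hl]; simp, by
        intro c hc
        rcases List.mem_cons.mp hc with rfl | h
        · exact hv
        · exact hz c h, ha⟩
    · exact ⟨[], v, l, by simp, by simp, hv⟩

lemma sign_pigeonhole {a b c : ℝ} (ha : a ≠ 0) (hb : b ≠ 0) (hc : c ≠ 0) :
    0 < a * b ∨ 0 < a * c ∨ 0 < b * c := by
  rcases ha.lt_or_gt with h1 | h1 <;> rcases hb.lt_or_gt with h2 | h2 <;>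
    rcases hc.lt_or_gt with h3 | h3 <;>
    first
      | (left; nlinarith)
      | (right; left; nlinarith)
      | (right; right; nlinarith)

end MyAux4
section MyAux5

variable {V : Type*} {G : SimpleGraph V} {σ : V → V → ℝ} {f : V → ℝ}

lemma forced_decomp {t p m s : List V} {a₁ a₂ a b : V}
    (ht : ∀ c ∈ t, f c = 0) (ha : f a ≠ 0) (hb : f b ≠ 0)
    (hdec : a₁ :: (t ++ [a₂]) = p ++ a :: (m ++ b :: s)) :
    p = [] ∧ a = a₁ ∧ m = t ∧ b = a₂ ∧ s = [] := by
  have hlen : t.length + 2 = p.length + (m.length + (s.length + 2)) := by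
    have := congrArg List.length hdec
    simp at this
    omega
  have hmid : ∀ k (hk : k < (a₁ :: (t ++ [a₂])).length), 1 ≤ k → k ≤ t.length →
      f ((a₁ :: (t ++ [a₂]))[k]'hk) = 0 := by
    intro k hk h1 h2
    have e0 : (a₁ :: (t ++ [a₂]))[k]'hk
        = ([a₁] ++ (t ++ [a₂]))[k]'(by simpa using hk) := rfl
    rw [e0, List.getElem_append_right (by simpa using h1),
      List.getElem_append_left (by simp; omega)]
    exact ht _ (List.getElem_mem _)
  have hp0 : p.length = 0 := by
    by_contra hp
    have h1 : 1 ≤ p.length := by omega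
    have hk : p.length < (a₁ :: (t ++ [a₂])).length := by simp; omega
    have hga : (a₁ :: (t ++ [a₂]))[p.length]'hk = a := by
      have he := List.getElem_of_eq hdec hk
      rw [he, List.getElem_append_right (le_refl p.length)]
      simp
    exact ha (hga ▸ hmid p.length hk h1 (by omega))
  have hs0 : s.length = 0 := by
    by_contra hsne
    have hk : p.length + m.length + 1 < (a₁ :: (t ++ [a₂])).length := by simp; omega
    have hgb : (a₁ :: (t ++ [a₂]))[p.length + m.length + 1]'hk = b := by
      have he := List.getElem_of_eq hdec hk
      rw [he, List.getElem_append_right (by omega : p.length ≤ p.length + m.length + 1),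
        List.getElem_cons]
      rw [dif_neg (by omega)]
      rw [List.getElem_append_right (by omega : m.length ≤ _)]
      simp only [show p.length + m.length + 1 - p.length - 1 - m.length = 0 by omega]
      simp
    exact hb (hgb ▸ hmid _ hk (by omega) (by omega))
  have hpn : p = [] := List.length_eq_zero_iff.mp hp0
  have hsn : s = [] := List.length_eq_zero_iff.mp hs0
  subst hpn; subst hsn
  simp only [List.nil_append] at hdec
  rw [List.cons_eq_cons] at hdec
  obtain ⟨rfl, hdec2⟩ := hdec
  have := List.append_inj' hdec2 rfl
  obtain ⟨rfl, h2⟩ := this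
  simp only [List.cons_eq_cons] at h2
  exact ⟨rfl, rfl, rfl, h2.1.symm, rfl⟩

lemma wconn_of_sign (hs : ∀ x y, σ x y = σ y x) {x a₁ a₂ : V} {z₁ z₂ : List V}
    (h1 : WW G σ f (z₁ ++ [a₁])) (h2 : WW G σ f (z₂ ++ [a₂]))
    (hz₁ : ∀ c ∈ z₁, f c = 0) (hz₂ : ∀ c ∈ z₂, f c = 0)
    (hhead₁ : z₁.head? = some x) (hhead₂ : z₂.head? = some x)
    (ha₁ : f a₁ ≠ 0) (ha₂ : f a₂ ≠ 0)
    (hsign : 0 < (f a₁ * chainSign σ (z₁ ++ [a₁])) * (f a₂ * chainSign σ (z₂ ++ [a₂]))) :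
    WConn G σ f a₁ a₂ := by
  obtain ⟨t₂, rfl⟩ : ∃ t, z₂ = x :: t := ⟨z₂.tail, List.eq_cons_of_mem_head? hhead₂⟩
  have hz₁ne : z₁ ≠ [] := by rintro rfl; simp at hhead₁
  have hrevne : z₁.reverse ≠ [] := by simpa using hz₁ne
  have hrevlast : z₁.reverse = z₁.reverse.dropLast ++ [x] := by
    apply eq_dropLast_concat
    rw [List.getLast?_reverse]
    exact hhead₁
  set t := z₁.reverse ++ t₂ with htdef
  have htzero : ∀ c ∈ t, f c = 0 := by
    intro c hc
    rcases List.mem_append.mp hc with h | h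
    · exact hz₁ c (List.mem_reverse.mp h)
    · exact hz₂ c (by simp [h])
  -- the composed walk
  set L := a₁ :: (t ++ [a₂]) with hLdef
  -- key list identity
  have hLsplit : L = (a₁ :: z₁.reverse.dropLast) ++ x :: (t₂ ++ [a₂]) := by
    rw [hLdef, htdef]
    conv_lhs => rw [hrevlast]
    simp
  have hchain1 : (a₁ :: z₁.reverse).Chain' G.Adj := by
    have : a₁ :: z₁.reverse = (z₁ ++ [a₁]).reverse := by simp
    rw [this]
    change List.IsChain _ _
    rw [List.isChain_reverse]
    change List.IsChain (flip G.Adj) _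
    rw [flip_adj]
    exact h1.1
  have hchain2 : (x :: (t₂ ++ [a₂])).Chain' G.Adj := by
    have : x :: (t₂ ++ [a₂]) = (x :: t₂) ++ [a₂] := by simp
    rw [this]
    exact h2.1
  have hchainL : L.Chain' G.Adj := by
    rw [hLsplit]
    change List.IsChain _ _
    rw [List.isChain_append]
    refine ⟨?_, hchain2, ?_⟩
    · have : a₁ :: z₁.reverse.dropLast = (a₁ :: z₁.reverse).dropLast := by
        rw [List.dropLast_cons_of_ne_nil hrevne]
      rw [this]
      exact hchain1.prefix (List.dropLast_prefix _)
    · intro c hc y hy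
      simp only [List.head?_cons, Option.mem_def, Option.some_inj] at hy
      subst hy
      have : a₁ :: z₁.reverse.dropLast ++ [x] = a₁ :: z₁.reverse := by
        rw [List.cons_append, ← hrevlast]
      have hch : (a₁ :: z₁.reverse.dropLast ++ [x]).Chain' G.Adj := by
        rw [this]; exact hchain1
      change List.IsChain _ _ at hch
      rw [List.isChain_append] at hch
      exact hch.2.2 c hc x (by simp)
  -- chainSign of L
  have hcsL : chainSign σ L
      = chainSign σ (z₁ ++ [a₁]) * chainSign σ ((x :: t₂) ++ [a₂]) := by
    rw [hLsplit, chainSign_append]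
    congr 1
    · have e1 : (a₁ :: z₁.reverse.dropLast) ++ [x] = a₁ :: z₁.reverse := by
        rw [List.cons_append, ← hrevlast]
      rw [e1, show a₁ :: z₁.reverse = (z₁ ++ [a₁]).reverse by simp,
        chainSign_reverse σ hs]
  have hWWL : WW G σ f L := by
    refine ⟨hchainL, ?_⟩
    rintro p a m b s hdec ha hb hm
    rw [hLdef] at hdec
    obtain ⟨rfl, rfl, rfl, rfl, rfl⟩ := forced_decomp htzero ha hb hdec
    rw [show chainSign σ (a :: (t ++ [b])) = chainSign σ L from by rw [hLdef], hcsL]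
    ring_nf
    ring_nf at hsign
    linarith [hsign]
  rw [wconn_iff]
  refine ⟨L, ⟨by simp [hLdef], hWWL⟩, by simp [hLdef], ?_⟩
  rw [hLdef, show a₁ :: (t ++ [a₂]) = (a₁ :: t) ++ [a₂] by simp, List.getLast?_concat]

end MyAux5
section MyMain

variable {V : Type*} {G : SimpleGraph V} {σ : V → V → ℝ} {f : V → ℝ}

lemma mem_of_getLast?_eq {α : Type*} {l : List α} {a : α} (h : l.getLast? = some a) :
    a ∈ l := by
  obtain ⟨hne, rfl⟩ := List.mem_getLast?_eq_getLast (show a ∈ l.getLast? by rw [h]; rfl)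
  exact List.getLast_mem hne

/-- Process one weak-domain membership of a zero vertex `x`. -/
lemma process_mem (hs : ∀ x y, σ x y = σ y x) {x w : V} (hx : f x = 0)
    (hmem : x ∈ weakClass G σ f w) :
    ∃ (z : List V) (a : V), WW G σ f (z ++ [a]) ∧ (∀ c ∈ z, f c = 0) ∧
      z.head? = some x ∧ f a ≠ 0 ∧ (a = w ∨ WConn G σ f a w) := by
  have hext : ∃ u, f u ≠ 0 ∧ (u = w ∨ WConn G σ f u w) ∧ WConn G σ f x u := by
    rcases hmem with ⟨hx', h⟩ | ⟨u, hu, h, hxu⟩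
    · exact absurd hx hx'
    · exact ⟨u, hu, h, hxu⟩
  obtain ⟨u, hu, hrw, hxu⟩ := hext
  obtain ⟨l, ⟨hlen, hww⟩, hh, hg⟩ := wconn_iff.mp hxu
  obtain ⟨z, a, r, hdec, hz, ha⟩ :=
    exists_first_nonzero l ⟨u, mem_of_getLast?_eq hg, hu⟩
  have hzne : z ≠ [] := by
    rintro rfl
    rw [hdec] at hh
    simp only [List.nil_append, List.head?_cons, Option.some_inj] at hh
    exact ha (by rw [hh]; exact hx)
  have hheadz : z.head? = some x := by
    rw [hdec, List.head?_append_of_ne_nil _ hzne] at hh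
    exact hh
  have hWWp : WW G σ f (z ++ [a]) := hww.infix ⟨[], r, by rw [hdec]; simp⟩
  have hrelau : a = u ∨ WConn G σ f a u := by
    cases r with
    | nil =>
      left
      rw [hdec, List.getLast?_append_of_ne_nil _ (by simp)] at hg
      simpa using hg
    | cons c r' =>
      right
      rw [wconn_iff]
      refine ⟨a :: c :: r', ⟨by simp, hww.infix ⟨z, [], by rw [hdec]; simp⟩⟩, rfl, ?_⟩
      rw [hdec, List.getLast?_append_of_ne_nil _ (by simp)] at hg
      exact hg
  exact ⟨z, a, hWWp, hz, hheadz, ha, rel_trans hu hrelau hrw⟩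

/-- Combine two processed memberships with matching sign. -/
lemma pair_eq (hs : ∀ x y, σ x y = σ y x) {x w w' : V} {z z' : List V} {a a' : V}
    (hw : f w ≠ 0) (hw' : f w' ≠ 0)
    (h1 : WW G σ f (z ++ [a])) (h1' : WW G σ f (z' ++ [a']))
    (hz : ∀ c ∈ z, f c = 0) (hz' : ∀ c ∈ z', f c = 0)
    (hh : z.head? = some x) (hh' : z'.head? = some x)
    (ha : f a ≠ 0) (ha' : f a' ≠ 0)
    (hrw : a = w ∨ WConn G σ f a w) (hrw' : a' = w' ∨ WConn G σ f a' w')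
    (hsign : 0 < (f a * chainSign σ (z ++ [a])) * (f a' * chainSign σ (z' ++ [a']))) :
    weakClass G σ f w = weakClass G σ f w' := by
  have key := wconn_of_sign hs h1 h1' hz hz' hh hh' ha ha' hsign
  exact weakClass_eq hs hw hw'
    (rel_trans ha (rel_symm hs hrw) (rel_trans ha' (Or.inr key) hrw'))

end MyMain

/-- three pairwise distinct weak nodal domains have empty intersection. -/
theorem stmt_7 {V : Type*} [Fintype V] (G : SimpleGraph V) (σ : V → V → ℝ)
    (hσ : IsSignature G σ) (f : V → ℝ) (hf : f ≠ 0)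
    (D₁ D₂ D₃ : Set V)
    (h1 : D₁ ∈ weakDomains G σ f) (h2 : D₂ ∈ weakDomains G σ f)
    (h3 : D₃ ∈ weakDomains G σ f)
    (h12 : D₁ ≠ D₂) (h13 : D₁ ≠ D₃) (h23 : D₂ ≠ D₃) :
    D₁ ∩ D₂ ∩ D₃ = ∅ := by
  obtain ⟨hσs, hσpm⟩ := hσ
  rw [Set.eq_empty_iff_forall_notMem]
  rintro x ⟨⟨hx1, hx2⟩, hx3⟩
  obtain ⟨w₁, hw₁, rfl⟩ := h1
  obtain ⟨w₂, hw₂, rfl⟩ := h2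
  obtain ⟨w₃, hw₃, rfl⟩ := h3
  by_cases hx : f x = 0
  · -- zero vertex: use sign pigeonhole
    obtain ⟨z₁, a₁, hW₁, hz₁, hh₁, ha₁, hr₁⟩ := process_mem hσs hx hx1
    obtain ⟨z₂, a₂, hW₂, hz₂, hh₂, ha₂, hr₂⟩ := process_mem hσs hx hx2
    obtain ⟨z₃, a₃, hW₃, hz₃, hh₃, ha₃, hr₃⟩ := process_mem hσs hx hx3
    have e₁ : f a₁ * chainSign σ (z₁ ++ [a₁]) ≠ 0 :=
      mul_ne_zero ha₁ (chainSign_ne_zero hσpm hW₁.1)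
    have e₂ : f a₂ * chainSign σ (z₂ ++ [a₂]) ≠ 0 :=
      mul_ne_zero ha₂ (chainSign_ne_zero hσpm hW₂.1)
    have e₃ : f a₃ * chainSign σ (z₃ ++ [a₃]) ≠ 0 :=
      mul_ne_zero ha₃ (chainSign_ne_zero hσpm hW₃.1)
    rcases sign_pigeonhole e₁ e₂ e₃ with h | h | h
    · exact h12 (pair_eq hσs hw₁ hw₂ hW₁ hW₂ hz₁ hz₂ hh₁ hh₂ ha₁ ha₂ hr₁ hr₂ h)
    · exact h13 (pair_eq hσs hw₁ hw₃ hW₁ hW₃ hz₁ hz₃ hh₁ hh₃ ha₁ ha₃ hr₁ hr₃ h)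
    · exact h23 (pair_eq hσs hw₂ hw₃ hW₂ hW₃ hz₂ hz₃ hh₂ hh₃ ha₂ ha₃ hr₂ hr₃ h)
  · -- nonzero vertex: x lies in the class of both w₁ and w₂
    have hxrel : ∀ w, x ∈ weakClass G σ f w → (x = w ∨ WConn G σ f x w) := by
      intro w hmem
      rcases hmem with ⟨-, h⟩ | ⟨u, hu, h, hxu⟩
      · exact h
      · exact rel_trans hu (Or.inr hxu) h
    exact h12 (weakClass_eq hσs hw₁ hw₂
      (rel_trans hx (rel_symm hσs (hxrel w₁ hx1)) (hxrel w₂ hx2)))
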